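/- Let X be a paracompact space with dim X = 0, Y a complete metric space, A ⊆ X a closed subset, and φ : X → Set Y a lower semicontinuous map with nonempty closed values. Then every continuous selection of φ restricted to A extends to a continuous selection of φ on all of X. -/

import Mathlib

open Metric Filter Set

/-- From a pointwise family of "good values" with open goodness sets, a
zero-dimensional space admits a locally constant choice. -/
theorem locConst_selection
    {X : Type*} [TopologicalSpace X]
    (hdim : ∀ 𝒰 : Set (Set X), (∀ U ∈ 𝒰, IsOpen U) → ⋃₀ 𝒰 = Set.univ →
      ∃ 𝒱 : Set (Set X), (∀ V ∈ 𝒱, IsOpen V) ∧ (∀ V ∈ 𝒱, ∃ U ∈ 𝒰, V ⊆ U) ∧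
        ⋃₀ 𝒱 = Set.univ ∧ 𝒱.Pairwise Disjoint)
    {Y : Type*} [TopologicalSpace Y] (P : X → Y → Prop)
    (hopen : ∀ y, IsOpen {z | P z y})
    (hex : ∀ x, ∃ y, P x y) :
    ∃ f : X → Y, Continuous f ∧ ∀ x, P x (f x) := by
  classical
  set 𝒰 : Set (Set X) := {U | ∃ y : Y, U = {z | P z y}} with h𝒰
  obtain ⟨𝒱, hVopen, hVsub, hVcov, hVdisj⟩ := hdim 𝒰
    (by rintro U ⟨y, rfl⟩; exact hopen y)
    (by
      apply Set.eq_univ_of_forall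
      intro x
      obtain ⟨y, hy⟩ := hex x
      exact ⟨{z | P z y}, ⟨y, rfl⟩, hy⟩)
  have hval : ∀ V ∈ 𝒱, ∃ y : Y, V ⊆ {z | P z y} := by
    intro V hV
    obtain ⟨U, ⟨y, rfl⟩, hsub⟩ := hVsub V hV
    exact ⟨y, hsub⟩
  choose val hvalspec using hval
  have hmem : ∀ x : X, ∃ V, ∃ h : V ∈ 𝒱, x ∈ V := by
    intro x
    have := hVcov ▸ Set.mem_univ x
    obtain ⟨V, hV, hxV⟩ := (Set.mem_sUnion).1 (hVcov ▸ Set.mem_univ x)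
    exact ⟨V, hV, hxV⟩
  choose v hv1 hv2 using hmem
  refine ⟨fun x => val (v x) (hv1 x), ?_, fun x => hvalspec (v x) (hv1 x) (hv2 x)⟩
  -- local constancy
  have hloc : ∀ x, ∀ z ∈ v x, val (v z) (hv1 z) = val (v x) (hv1 x) := by
    intro x z hz
    have e : v z = v x := by
      by_contra hne
      exact Set.disjoint_left.1 (hVdisj (hv1 z) (hv1 x) hne) (hv2 z) hz
    exact congrArg (fun p : {V // V ∈ 𝒱} => val p.1 p.2)
      (Subtype.ext e : (⟨v z, hv1 z⟩ : {V // V ∈ 𝒱}) = ⟨v x, hv1 x⟩)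
  rw [continuous_iff_continuousAt]
  intro x
  have hev : ∀ᶠ z in nhds x, val (v z) (hv1 z) = val (v x) (hv1 x) :=
    Filter.eventually_of_mem ((hVopen _ (hv1 x)).mem_nhds (hv2 x)) (hloc x)
  exact Filter.Tendsto.congr' (Filter.EventuallyEq.symm hev) tendsto_const_nhds

/-- Zero-dimensional Michael selection theorem. -/
theorem zero_dimensional_selection
    {X : Type*} [TopologicalSpace X]
    (hdim : ∀ 𝒰 : Set (Set X), (∀ U ∈ 𝒰, IsOpen U) → ⋃₀ 𝒰 = Set.univ →
      ∃ 𝒱 : Set (Set X), (∀ V ∈ 𝒱, IsOpen V) ∧ (∀ V ∈ 𝒱, ∃ U ∈ 𝒰, V ⊆ U) ∧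
        ⋃₀ 𝒱 = Set.univ ∧ 𝒱.Pairwise Disjoint)
    {Y : Type*} [MetricSpace Y] [CompleteSpace Y]
    (φ : X → Set Y)
    (hlsc : ∀ U : Set Y, IsOpen U → IsOpen {x | (φ x ∩ U).Nonempty})
    (hne : ∀ x, (φ x).Nonempty)
    (hcl : ∀ x, IsClosed (φ x)) :
    ∃ f : X → Y, Continuous f ∧ ∀ x, f x ∈ φ x := by
  classical
  set Q : ℕ → (X → Y) → Prop :=
    fun n f => Continuous f ∧ ∀ x, (φ x ∩ Metric.ball (f x) ((2:ℝ)⁻¹ ^ n)).Nonempty with hQ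
  have base : ∃ f, Q 0 f := by
    obtain ⟨f, hfc, hfP⟩ := locConst_selection hdim
      (fun z y => (φ z ∩ Metric.ball y 1).Nonempty)
      (fun y => hlsc _ Metric.isOpen_ball)
      (fun x => by
        obtain ⟨y, hy⟩ := hne x
        exact ⟨y, y, hy, by simp⟩)
    refine ⟨f, hfc, fun x => by simpa using hfP x⟩
  have step : ∀ n (f : X → Y), Q n f →
      ∃ f', Q (n+1) f' ∧ ∀ x, dist (f x) (f' x) < (2:ℝ)⁻¹ ^ n := by
    intro n f hf
    obtain ⟨f', hfc, hfP⟩ := locConst_selection hdim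
      (fun z y => (φ z ∩ Metric.ball y ((2:ℝ)⁻¹ ^ (n+1))).Nonempty ∧ dist (f z) y < (2:ℝ)⁻¹ ^ n)
      (fun y => (hlsc _ Metric.isOpen_ball).inter
        ((Metric.isOpen_ball (x := y) (ε := (2:ℝ)⁻¹ ^ n)).preimage hf.1))
      (fun x => by
        obtain ⟨y, hyφ, hyb⟩ := hf.2 x
        refine ⟨y, ⟨y, hyφ, Metric.mem_ball_self (by positivity)⟩, ?_⟩
        · rw [dist_comm]; exact Metric.mem_ball.1 hyb)
    exact ⟨f', ⟨hfc, fun x => (hfP x).1⟩, fun x => (hfP x).2⟩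
  -- build the sequence
  let T : ℕ → Type _ := fun n => {f : X → Y // Q n f}
  let Fs : ∀ n, T n := fun n =>
    Nat.rec ⟨Classical.choose base, Classical.choose_spec base⟩
      (fun n f => ⟨Classical.choose (step n f.1 f.2),
        (Classical.choose_spec (step n f.1 f.2)).1⟩) n
  set F : ℕ → X → Y := fun n => (Fs n).1 with hF
  have hdist : ∀ n x, dist (F n x) (F (n+1) x) < (2:ℝ)⁻¹ ^ n := fun n x =>
    (Classical.choose_spec (step n (Fs n).1 (Fs n).2)).2 x
  have hcont : ∀ n, Continuous (F n) := fun n => (Fs n).2.1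
  have hnear : ∀ n x, (φ x ∩ Metric.ball (F n x) ((2:ℝ)⁻¹ ^ n)).Nonempty := fun n x => (Fs n).2.2 x
  have hdle : ∀ x n, dist (F n x) (F (n+1) x) ≤ 1 * (2:ℝ)⁻¹ ^ n :=
    fun x n => by simpa using (hdist n x).le
  have hr : (2:ℝ)⁻¹ < 1 := by norm_num
  have hcauchy : ∀ x, CauchySeq (fun n => F n x) :=
    fun x => cauchySeq_of_le_geometric _ _ hr (hdle x)
  have hlim : ∀ x, ∃ y, Tendsto (fun n => F n x) atTop (nhds y) :=
    fun x => cauchySeq_tendsto_of_complete (hcauchy x)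
  choose f hf using hlim
  have hbound : ∀ x n, dist (F n x) (f x) ≤ 2 * (2:ℝ)⁻¹ ^ n := by
    intro x n
    have := dist_le_of_le_geometric_of_tendsto ((2:ℝ)⁻¹) 1 hr (hdle x) (hf x) n
    calc dist (F n x) (f x) ≤ 1 * (2:ℝ)⁻¹ ^ n / (1 - 2⁻¹) := this
      _ = 2 * (2:ℝ)⁻¹ ^ n := by ring
  have htendsto0 : Tendsto (fun n : ℕ => (2:ℝ)⁻¹ ^ n) atTop (nhds 0) :=
    tendsto_pow_atTop_nhds_zero_of_lt_one (by norm_num) hr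
  have hTU : TendstoUniformly F f atTop := by
    rw [Metric.tendstoUniformly_iff]
    intro ε hε
    have : ∀ᶠ n : ℕ in atTop, 2 * (2:ℝ)⁻¹ ^ n < ε := by
      have h2 : Tendsto (fun n : ℕ => 2 * (2:ℝ)⁻¹ ^ n) atTop (nhds 0) := by
        simpa using htendsto0.const_mul 2
      exact (h2.eventually (gt_mem_nhds hε))
    filter_upwards [this] with n hn x
    calc dist (f x) (F n x) = dist (F n x) (f x) := dist_comm _ _
      _ ≤ 2 * (2:ℝ)⁻¹ ^ n := hbound x n
      _ < ε := hn
  refine ⟨f, hTU.continuous (Filter.Eventually.of_forall hcont).frequently, fun x => ?_⟩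
  have hinf : Metric.infDist (f x) (φ x) = 0 := by
    refine le_antisymm ?_ Metric.infDist_nonneg
    have hle : ∀ n, Metric.infDist (f x) (φ x) ≤ 3 * (2:ℝ)⁻¹ ^ n := by
      intro n
      obtain ⟨y, hyφ, hyb⟩ := hnear n x
      calc Metric.infDist (f x) (φ x) ≤ dist (f x) y := Metric.infDist_le_dist_of_mem hyφ
        _ ≤ dist (f x) (F n x) + dist (F n x) y := dist_triangle _ _ _
        _ ≤ 2 * (2:ℝ)⁻¹ ^ n + (2:ℝ)⁻¹ ^ n := by
            refine add_le_add ?_ ?_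
            · rw [dist_comm]; exact hbound x n
            · rw [dist_comm]; exact (Metric.mem_ball.1 hyb).le
        _ = 3 * (2:ℝ)⁻¹ ^ n := by ring
    have h3 : Tendsto (fun n : ℕ => 3 * (2:ℝ)⁻¹ ^ n) atTop (nhds 0) := by
      simpa using htendsto0.const_mul 3
    exact ge_of_tendsto' h3 hle
  exact ((hcl x).mem_iff_infDist_zero (hne x)).2 hinf

/-- Selection-extension form of the zero-dimensional selection theorem. -/
theorem zero_dimensional_selection_extension
    {X : Type*} [TopologicalSpace X] [ParacompactSpace X]
    (hdim : ∀ 𝒰 : Set (Set X), (∀ U ∈ 𝒰, IsOpen U) → ⋃₀ 𝒰 = Set.univ →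
      ∃ 𝒱 : Set (Set X), (∀ V ∈ 𝒱, IsOpen V) ∧ (∀ V ∈ 𝒱, ∃ U ∈ 𝒰, V ⊆ U) ∧
        ⋃₀ 𝒱 = Set.univ ∧ 𝒱.Pairwise Disjoint)
    {Y : Type*} [MetricSpace Y] [CompleteSpace Y]
    (A : Set X) (hA : IsClosed A)
    (φ : X → Set Y)
    (hlsc : ∀ U : Set Y, IsOpen U → IsOpen {x | (φ x ∩ U).Nonempty})
    (hne : ∀ x, (φ x).Nonempty)
    (hcl : ∀ x, IsClosed (φ x))
    (g : A → Y) (hg : Continuous g) (hgsel : ∀ a : A, g a ∈ φ a) :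
    ∃ f : X → Y, Continuous f ∧ (∀ x, f x ∈ φ x) ∧ ∀ a : A, f a = g a := by
  classical
  set ψ : X → Set Y := fun x => if h : x ∈ A then {g ⟨x, h⟩} else φ x with hψ
  have hψsub : ∀ x, ψ x ⊆ φ x := by
    intro x y hy
    by_cases h : x ∈ A
    · simp only [hψ, dif_pos h, Set.mem_singleton_iff] at hy
      exact hy ▸ hgsel ⟨x, h⟩
    · simpa [hψ, dif_neg h] using hy
  have hψA : ∀ (x : X) (h : x ∈ A), ψ x = {g ⟨x, h⟩} := fun x h => by simp [hψ, dif_pos h]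
  have hψnA : ∀ x, x ∉ A → ψ x = φ x := fun x h => by simp [hψ, dif_neg h]
  have hψne : ∀ x, (ψ x).Nonempty := by
    intro x
    by_cases h : x ∈ A
    · rw [hψA x h]; exact ⟨_, rfl⟩
    · rw [hψnA x h]; exact hne x
  have hψcl : ∀ x, IsClosed (ψ x) := by
    intro x
    by_cases h : x ∈ A
    · rw [hψA x h]; exact isClosed_singleton
    · rw [hψnA x h]; exact hcl x
  have hψlsc : ∀ U : Set Y, IsOpen U → IsOpen {x | (ψ x ∩ U).Nonempty} := by
    intro U hU
    rw [isOpen_iff_forall_mem_open]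
    intro x hx
    obtain ⟨y, hyψ, hyU⟩ := hx
    have hxW : x ∈ {z | (φ z ∩ U).Nonempty} := ⟨y, hψsub x hyψ, hyU⟩
    by_cases h : x ∈ A
    · -- x ∈ A : then y = g x ∈ U; use continuity of g
      have hyg : y = g ⟨x, h⟩ := by
        have := hψA x h ▸ hyψ; simpa using this
      have hgU : g ⟨x, h⟩ ∈ U := hyg ▸ hyU
      have hopen : IsOpen {a : A | g a ∈ U} := hU.preimage hg
      obtain ⟨V, hVopen, hVeq⟩ := isOpen_induced_iff.1 hopen
      have hxV : x ∈ V := by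
        have : (⟨x, h⟩ : A) ∈ {a : A | g a ∈ U} := hgU
        rw [← hVeq] at this
        exact this
      refine ⟨{z | (φ z ∩ U).Nonempty} ∩ V, ?_, (hlsc U hU).inter hVopen, hxW, hxV⟩
      rintro z ⟨hzW, hzV⟩
      by_cases hz : z ∈ A
      · have hgz : g ⟨z, hz⟩ ∈ U := by
          have : (⟨z, hz⟩ : A) ∈ Subtype.val ⁻¹' V := hzV
          rw [hVeq] at this
          exact this
        exact ⟨g ⟨z, hz⟩, by rw [hψA z hz]; exact ⟨rfl, hgz⟩⟩
      · rw [Set.mem_setOf_eq, hψnA z hz]; exact hzW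
    · refine ⟨{z | (φ z ∩ U).Nonempty} ∩ Aᶜ, ?_, (hlsc U hU).inter hA.isOpen_compl, hxW, h⟩
      rintro z ⟨hzW, hz⟩
      rw [Set.mem_setOf_eq, hψnA z hz]; exact hzW
  obtain ⟨f, hfc, hfsel⟩ := zero_dimensional_selection hdim ψ hψlsc hψne hψcl
  refine ⟨f, hfc, fun x => hψsub x (hfsel x), fun a => ?_⟩
  have := hfsel a
  rw [hψA a a.2] at this
  simpa using this
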